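/- arXiv:1308.3639 — 5 statements merged into one kernel-verified Lean document; each statement's English description precedes it below -/
import Mathlib

section
/- Under the assumptions of the previous iteration (F usc, l-ROSL with l < 0, L-Lipschitz, L < -2l), the sequence x_{n+1} := x_n + (1/(2l))(ȳ - Proj(ȳ, F(x_n))) is Cauchy and converges to some x̄ with ȳ ∈ F(x̄), and |x_n - x̄| ≤ -(1/(2l))·((L/|2l|)^n / (1 - L/|2l|))·dist(ȳ, F(x₀)) for n ≥ 1. -/
open Metric Filter RealInnerProductSpace

set_option maxHeartbeats 1000000 in
/-- Key single-step contraction estimate for the set-valued Newton iteration. -/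
lemma stmt_6_key_step {d : ℕ}
    (F : EuclideanSpace ℝ (Fin d) → Set (EuclideanSpace ℝ (Fin d)))
    (hne : ∀ x, (F x).Nonempty) (hcp : ∀ x, IsCompact (F x)) (hcv : ∀ x, Convex ℝ (F x))
    (l L : ℝ) (hl : l < 0) (hL0 : 0 < L)
    (hrosl : ∀ x x', ∀ y ∈ F x, ∃ y' ∈ F x',
      ⟪y - y', x - x'⟫ ≤ l * ‖x - x'‖ ^ 2)
    (hlip : ∀ x x', Metric.hausdorffDist (F x) (F x') ≤ L * ‖x - x'‖)
    (yb xa pa pb : EuclideanSpace ℝ (Fin d))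
    (hpa : pa ∈ F xa) (hda : dist yb pa = Metric.infDist yb (F xa))
    (hpb : pb ∈ F (xa + (1 / (2 * l)) • (yb - pa)))
    (hdb : dist yb pb = Metric.infDist yb (F (xa + (1 / (2 * l)) • (yb - pa)))) :
    dist yb pb ≤ (L / (2 * -l)) * dist yb pa := by
  have hl2 : (0:ℝ) < 2 * -l := by linarith
  have hl2' : (2:ℝ) * -l ≠ 0 := ne_of_gt hl2
  have hlne : l ≠ 0 := ne_of_lt hl
  have hq0 : 0 < L / (2 * -l) := div_pos hL0 hl2
  set xb' : EuclideanSpace ℝ (Fin d) := xa + (1 / (2 * l)) • (yb - pa) with hxb'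
  rcases eq_or_lt_of_le (dist_nonneg : (0:ℝ) ≤ dist yb pa) with h0 | hrpos
  · -- dist yb pa = 0 : the step is trivial
    have hyb : yb = pa := dist_eq_zero.mp h0.symm
    have hfix : xb' = xa := by
      rw [hxb', sub_eq_zero_of_eq hyb, smul_zero, add_zero]
    have hz : dist yb pb = 0 := by
      rw [hdb, hfix, ← hda, ← h0]
    rw [hz, ← h0, mul_zero]
  · -- dist yb pa > 0
    have hrne : dist yb pa ≠ 0 := ne_of_gt hrpos
    set σ : ℝ := dist yb pa / (2 * -l) with hσdef
    have hσpos : 0 < σ := div_pos hrpos hl2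
    have hLσ : L * σ = L / (2 * -l) * dist yb pa := by
      rw [hσdef]; ring
    set e : EuclideanSpace ℝ (Fin d) := (dist yb pa)⁻¹ • (yb - pa) with hedef
    have hre : (dist yb pa) • e = yb - pa := by
      rw [hedef, smul_inv_smul₀ hrne]
    have hnyb : ‖yb - pa‖ = dist yb pa := (dist_eq_norm yb pa).symm
    have hnorme : ‖e‖ = 1 := by
      rw [hedef, norm_smul, hnyb, Real.norm_eq_abs, abs_inv, abs_of_pos hrpos,
        inv_mul_cancel₀ hrne]
    have hstep : xb' = xa - σ • e := by
      rw [hxb', ← hre, smul_smul, sub_eq_add_neg, ← neg_smul]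
      congr 1
      rw [hσdef]
      field_simp
    have hxaxb : ‖xa - xb'‖ = σ := by
      rw [hstep]
      have h1 : xa - (xa - σ • e) = σ • e := by abel
      rw [h1, norm_smul, hnorme, Real.norm_eq_abs, abs_of_pos hσpos, mul_one]
    -- every point of some F x₁ has a point of F xb' nearby
    have hnear : ∀ (x₁ y : EuclideanSpace ℝ (Fin d)), y ∈ F x₁ →
        ∃ b ∈ F xb', dist y b ≤ L * ‖x₁ - xb'‖ := by
      intro x₁ y hy
      have hfin : EMetric.hausdorffEdist (F x₁) (F xb') ≠ ⊤ :=
        Metric.hausdorffEdist_ne_top_of_nonempty_of_bounded (hne x₁) (hne xb')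
          (hcp x₁).isBounded (hcp xb').isBounded
      have h1 : Metric.infDist y (F xb') ≤ Metric.hausdorffDist (F x₁) (F xb') :=
        Metric.infDist_le_hausdorffDist_of_mem hy hfin
      obtain ⟨b, hbB, hb⟩ := (hcp xb').exists_infDist_eq_dist (hne xb') y
      exact ⟨b, hbB, by rw [← hb]; exact h1.trans (hlip x₁ xb')⟩
    rcases eq_or_lt_of_le (dist_nonneg : (0:ℝ) ≤ dist yb pb) with hρ0 | hρpos
    · rw [← hρ0]; positivity
    · have hρne : dist yb pb ≠ 0 := ne_of_gt hρpos
      set u : EuclideanSpace ℝ (Fin d) := (dist yb pb)⁻¹ • (yb - pb) with hudef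
      have hρu : (dist yb pb) • u = yb - pb := by rw [hudef, smul_inv_smul₀ hρne]
      have hnybb : ‖yb - pb‖ = dist yb pb := (dist_eq_norm yb pb).symm
      have hnormu : ‖u‖ = 1 := by
        rw [hudef, norm_smul, hnybb, Real.norm_eq_abs, abs_inv, abs_of_pos hρpos,
          inv_mul_cancel₀ hρne]
      -- projection characterization at pb
      have hproj : ∀ b ∈ F xb', ⟪yb - pb, b - pb⟫ ≤ 0 := by
        have hmin : ‖yb - pb‖ = ⨅ w : F xb', ‖yb - w‖ := by
          rw [← dist_eq_norm, hdb, Metric.infDist_eq_iInf]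
          simp only [dist_eq_norm]
        exact (norm_eq_iInf_iff_real_inner_le_zero (hcv xb') hpb).mp hmin
      have hρsq : ∀ b ∈ F xb', (dist yb pb) ^ 2 ≤ ⟪yb - pb, yb - b⟫ := by
        intro b hb
        have hdecomp : yb - b = (yb - pb) - (b - pb) := by abel
        rw [hdecomp, inner_sub_right, real_inner_self_eq_norm_sq, hnybb]
        have := hproj b hb
        linarith
      set c : ℝ := ⟪u, e⟫ with hcdef
      rcases le_or_gt c 0 with hcneg | hcpos
      · -- c ≤ 0 : use the point of F xb' near pa
        obtain ⟨b, hbB, hb⟩ := hnear xa pa hpa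
        rw [hxaxb, hLσ] at hb
        have h1 : (dist yb pb) ^ 2 ≤ ⟪yb - pb, yb - b⟫ := hρsq b hbB
        have hdec : yb - b = (yb - pa) + (pa - b) := by abel
        have h2 : ⟪yb - pb, yb - pa⟫ = dist yb pb * (dist yb pa * c) := by
          rw [← hρu, ← hre, real_inner_smul_left, real_inner_smul_right, hcdef]
        have h3 : ⟪yb - pb, pa - b⟫ ≤ dist yb pb * (L / (2 * -l) * dist yb pa) := by
          calc ⟪yb - pb, pa - b⟫ ≤ ‖yb - pb‖ * ‖pa - b‖ := real_inner_le_norm _ _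
            _ = dist yb pb * dist pa b := by rw [hnybb, ← dist_eq_norm]
            _ ≤ dist yb pb * (L / (2 * -l) * dist yb pa) :=
                mul_le_mul_of_nonneg_left hb dist_nonneg
        have h4 : ⟪yb - pb, yb - b⟫ ≤ dist yb pb * (L / (2 * -l) * dist yb pa) := by
          rw [hdec, inner_add_right]
          have h5 : dist yb pb * (dist yb pa * c) ≤ 0 :=
            mul_nonpos_of_nonneg_of_nonpos dist_nonneg
              (mul_nonpos_of_nonneg_of_nonpos dist_nonneg hcneg)
          linarith [h2, h3]
        have h6 : dist yb pb * dist yb pb ≤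
            dist yb pb * (L / (2 * -l) * dist yb pa) := by
          nlinarith [le_trans h1 h4]
        exact le_of_mul_le_mul_left h6 hρpos
      · -- c > 0 : use the auxiliary point x' = xa - (2σc) • u
        set x' : EuclideanSpace ℝ (Fin d) := xa - (2 * σ * c) • u with hx'def
        have hc2 : 0 < 2 * σ * c := by positivity
        obtain ⟨y', hy', hro⟩ := hrosl xa x' pa hpa
        have hxx' : xa - x' = (2 * σ * c) • u := by rw [hx'def]; abel
        have hnxx' : ‖xa - x'‖ = 2 * σ * c := by
          rw [hxx', norm_smul, hnormu, Real.norm_eq_abs, abs_of_pos hc2, mul_one]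
        -- from ROSL : ⟪pa - y', u⟫ ≤ -(dist yb pa * c)
        have hros2 : ⟪pa - y', u⟫ ≤ -(dist yb pa * c) := by
          rw [hxx', real_inner_smul_right, norm_smul, hnormu, mul_one, Real.norm_eq_abs,
            abs_of_pos hc2] at hro
          have h6 : (2 * σ * c) * ⟪pa - y', u⟫ ≤ (2 * σ * c) * (l * (2 * σ * c)) := by
            nlinarith [hro]
          have h7 : ⟪pa - y', u⟫ ≤ l * (2 * σ * c) := le_of_mul_le_mul_left h6 hc2
          have h8 : l * (2 * σ * c) = -(dist yb pa * c) := by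
            rw [hσdef]
            field_simp
          linarith
        -- ‖x' - xb'‖ = σ
        have hx'xb : ‖x' - xb'‖ = σ := by
          have hvec : x' - xb' = σ • e - (2 * σ * c) • u := by
            rw [hx'def, hstep]; abel
          have hinner : ⟪σ • e, (2 * σ * c) • u⟫ = 2 * σ ^ 2 * c ^ 2 := by
            rw [real_inner_smul_left, real_inner_smul_right, real_inner_comm u e, ← hcdef]
            ring
          have hne2 : ‖σ • e‖ ^ 2 = σ ^ 2 := by
            rw [norm_smul, hnorme, Real.norm_eq_abs, abs_of_pos hσpos, mul_one]
          have hnu2 : ‖(2 * σ * c) • u‖ ^ 2 = 4 * σ ^ 2 * c ^ 2 := by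
            rw [norm_smul, hnormu, Real.norm_eq_abs, abs_of_pos hc2, mul_one]
            ring
          have hsq : ‖x' - xb'‖ ^ 2 = σ ^ 2 := by
            rw [hvec, norm_sub_sq_real, hne2, hnu2, hinner]
            ring
          calc ‖x' - xb'‖ = Real.sqrt (‖x' - xb'‖ ^ 2) := (Real.sqrt_sq (norm_nonneg _)).symm
            _ = Real.sqrt (σ ^ 2) := by rw [hsq]
            _ = σ := Real.sqrt_sq (le_of_lt hσpos)
        obtain ⟨b, hbB, hb⟩ := hnear x' y' hy'
        rw [hx'xb, hLσ] at hb
        have h1 : (dist yb pb) ^ 2 ≤ ⟪yb - pb, yb - b⟫ := hρsq b hbB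
        have hdec : yb - b = (yb - pa) + (pa - y') + (y' - b) := by abel
        have h2 : ⟪yb - pb, yb - pa⟫ = dist yb pb * (dist yb pa * c) := by
          rw [← hρu, ← hre, real_inner_smul_left, real_inner_smul_right, hcdef]
        have h3 : ⟪yb - pb, pa - y'⟫ ≤ dist yb pb * (-(dist yb pa * c)) := by
          rw [← hρu, real_inner_smul_left, real_inner_comm]
          exact mul_le_mul_of_nonneg_left hros2 dist_nonneg
        have h4 : ⟪yb - pb, y' - b⟫ ≤ dist yb pb * (L / (2 * -l) * dist yb pa) := by
          calc ⟪yb - pb, y' - b⟫ ≤ ‖yb - pb‖ * ‖y' - b‖ := real_inner_le_norm _ _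
            _ = dist yb pb * dist y' b := by rw [hnybb, ← dist_eq_norm]
            _ ≤ dist yb pb * (L / (2 * -l) * dist yb pa) :=
                mul_le_mul_of_nonneg_left hb dist_nonneg
        have h5 : ⟪yb - pb, yb - b⟫ ≤ dist yb pb * (L / (2 * -l) * dist yb pa) := by
          rw [hdec, inner_add_right, inner_add_right]
          linarith [h2, h3, h4]
        have h6 : dist yb pb * dist yb pb ≤
            dist yb pb * (L / (2 * -l) * dist yb pa) := by
          nlinarith [le_trans h1 h5]
        exact le_of_mul_le_mul_left h6 hρpos

set_option maxHeartbeats 1000000 in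
theorem stmt_6 {d : ℕ}
    (F : EuclideanSpace ℝ (Fin d) → Set (EuclideanSpace ℝ (Fin d)))
    (hne : ∀ x, (F x).Nonempty) (hcp : ∀ x, IsCompact (F x)) (hcv : ∀ x, Convex ℝ (F x))
    (husc : ∀ x, ∀ ε > 0, ∃ δ > 0, ∀ x', dist x' x < δ →
      ∀ y ∈ F x', Metric.infDist y (F x) < ε)
    (l L : ℝ) (hl : l < 0) (hL0 : 0 < L) (hL : L < -(2 * l))
    (hrosl : ∀ x x', ∀ y ∈ F x, ∃ y' ∈ F x',
      ⟪y - y', x - x'⟫ ≤ l * ‖x - x'‖ ^ 2)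
    (hlip : ∀ x x', Metric.hausdorffDist (F x) (F x') ≤ L * ‖x - x'‖)
    (yb : EuclideanSpace ℝ (Fin d))
    (x p : ℕ → EuclideanSpace ℝ (Fin d))
    (hp : ∀ n, p n ∈ F (x n) ∧ dist yb (p n) = Metric.infDist yb (F (x n)))
    (hx : ∀ n, x (n + 1) = x n + (1 / (2 * l)) • (yb - p n)) :
    CauchySeq x ∧
    ∃ xb : EuclideanSpace ℝ (Fin d), yb ∈ F xb ∧
      Tendsto x atTop (nhds xb) ∧
      ∀ n, 1 ≤ n →
        ‖x n - xb‖ ≤ -(1 / (2 * l)) * ((L / |2 * l|) ^ n / (1 - L / |2 * l|)) *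
          Metric.infDist yb (F (x 0)) := by
  have hl2 : (0:ℝ) < 2 * -l := by linarith
  have hlne : l ≠ 0 := ne_of_lt hl
  have habs : |2 * l| = 2 * -l := by
    rw [abs_of_neg (show 2 * l < 0 by linarith)]; ring
  have hq0 : 0 < L / (2 * -l) := div_pos hL0 hl2
  have hq1 : L / (2 * -l) < 1 := by
    rw [div_lt_one hl2]
    linarith
  have hinv : 1 / (2 * l) < 0 := div_neg_of_pos_of_neg one_pos (by linarith)
  have hm0 : 0 < -(1 / (2 * l)) := by linarith
  -- per-step contraction
  have hstep : ∀ n, dist yb (p (n + 1)) ≤ L / (2 * -l) * dist yb (p n) := by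
    intro n
    exact stmt_6_key_step F hne hcp hcv l L hl hL0 hrosl hlip yb (x n) (p n) (p (n + 1))
      (hp n).1 (hp n).2
      (by rw [← hx n]; exact (hp (n + 1)).1)
      (by rw [← hx n]; exact (hp (n + 1)).2)
  -- geometric decay of residuals
  have hgeom : ∀ n, dist yb (p n) ≤ (L / (2 * -l)) ^ n * dist yb (p 0) := by
    intro n
    induction n with
    | zero => simp
    | succ n ih =>
      calc dist yb (p (n + 1)) ≤ L / (2 * -l) * dist yb (p n) := hstep n
        _ ≤ L / (2 * -l) * ((L / (2 * -l)) ^ n * dist yb (p 0)) :=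
            mul_le_mul_of_nonneg_left ih (le_of_lt hq0)
        _ = (L / (2 * -l)) ^ (n + 1) * dist yb (p 0) := by ring
  -- geometric bound on successive distances
  have hdx : ∀ n, dist (x n) (x (n + 1)) ≤
      (-(1 / (2 * l)) * dist yb (p 0)) * (L / (2 * -l)) ^ n := by
    intro n
    have h1 : dist (x n) (x (n + 1)) = -(1 / (2 * l)) * dist yb (p n) := by
      rw [hx n, dist_eq_norm]
      have h2 : x n - (x n + (1 / (2 * l)) • (yb - p n)) = -((1 / (2 * l)) • (yb - p n)) := by
        abel
      rw [h2, norm_neg, norm_smul, Real.norm_eq_abs, abs_of_neg hinv, ← dist_eq_norm]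
    rw [h1]
    calc -(1 / (2 * l)) * dist yb (p n)
        ≤ -(1 / (2 * l)) * ((L / (2 * -l)) ^ n * dist yb (p 0)) :=
          mul_le_mul_of_nonneg_left (hgeom n) (le_of_lt hm0)
      _ = (-(1 / (2 * l)) * dist yb (p 0)) * (L / (2 * -l)) ^ n := by ring
  have hcauchy : CauchySeq x :=
    cauchySeq_of_le_geometric (L / (2 * -l)) (-(1 / (2 * l)) * dist yb (p 0)) hq1 hdx
  obtain ⟨xb, hxb⟩ := cauchySeq_tendsto_of_complete hcauchy
  have hbound : ∀ n, dist (x n) xb ≤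
      (-(1 / (2 * l)) * dist yb (p 0)) * (L / (2 * -l)) ^ n / (1 - L / (2 * -l)) :=
    fun n => dist_le_of_le_geometric_of_tendsto (L / (2 * -l))
      (-(1 / (2 * l)) * dist yb (p 0)) hq1 hdx hxb n
  refine ⟨hcauchy, xb, ?_, hxb, ?_⟩
  · -- yb ∈ F xb
    have hfin : ∀ n, EMetric.hausdorffEdist (F (x n)) (F xb) ≠ ⊤ := fun n =>
      Metric.hausdorffEdist_ne_top_of_nonempty_of_bounded (hne (x n)) (hne xb)
        (hcp (x n)).isBounded (hcp xb).isBounded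
    have hle : ∀ n, Metric.infDist yb (F xb) ≤
        (L / (2 * -l)) ^ n * dist yb (p 0) + L * dist (x n) xb := by
      intro n
      calc Metric.infDist yb (F xb)
          ≤ Metric.infDist yb (F (x n)) + Metric.hausdorffDist (F (x n)) (F xb) :=
            Metric.infDist_le_infDist_add_hausdorffDist (hfin n)
        _ ≤ (L / (2 * -l)) ^ n * dist yb (p 0) + L * dist (x n) xb := by
            apply add_le_add
            · rw [← (hp n).2]; exact hgeom n
            · calc Metric.hausdorffDist (F (x n)) (F xb) ≤ L * ‖x n - xb‖ := hlip (x n) xb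
                _ = L * dist (x n) xb := by rw [dist_eq_norm]
    have htend : Tendsto (fun n => (L / (2 * -l)) ^ n * dist yb (p 0) + L * dist (x n) xb)
        atTop (nhds 0) := by
      have h1 : Tendsto (fun n : ℕ => (L / (2 * -l)) ^ n * dist yb (p 0)) atTop (nhds 0) := by
        have := (tendsto_pow_atTop_nhds_zero_of_lt_one (le_of_lt hq0) hq1).mul_const
          (dist yb (p 0))
        simpa using this
      have h2 : Tendsto (fun n => L * dist (x n) xb) atTop (nhds 0) := by
        have hd : Tendsto (fun n => dist (x n) xb) atTop (nhds 0) := by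
          have := hxb.dist (tendsto_const_nhds : Tendsto (fun _ : ℕ => xb) atTop (nhds xb))
          simpa using this
        have := hd.const_mul L
        simpa using this
      have := h1.add h2
      simpa using this
    have hinf0 : Metric.infDist yb (F xb) ≤ 0 :=
      le_of_tendsto_of_tendsto' tendsto_const_nhds htend hle
    have hinf : Metric.infDist yb (F xb) = 0 :=
      le_antisymm hinf0 Metric.infDist_nonneg
    exact ((hcp xb).isClosed.mem_iff_infDist_zero (hne xb)).mpr hinf
  · -- the quantitative bound
    intro n _
    have h1 : ‖x n - xb‖ = dist (x n) xb := by rw [dist_eq_norm]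
    rw [h1, ← (hp 0).2, habs]
    calc dist (x n) xb
        ≤ (-(1 / (2 * l)) * dist yb (p 0)) * (L / (2 * -l)) ^ n / (1 - L / (2 * -l)) :=
          hbound n
      _ = -(1 / (2 * l)) * ((L / (2 * -l)) ^ n / (1 - L / (2 * -l))) * dist yb (p 0) := by
          ring
end

section
/- Let l < 0, L ≥ -l, α = √(L² - l²), and Φ the linear map on ℝ² with matrix (1/2)·[[1, -α/l], [α/l, 1]]. Then for every x₀ ≠ 0, the iterates Φⁿ(x₀) converge to 0 if and only if L < -2l. -/
open Metric Filter

theorem stmt_10 (l L : ℝ) (hl : l < 0) (hL : -l ≤ L)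
    (α : ℝ) (hα : α = Real.sqrt (L ^ 2 - l ^ 2))
    (M : Matrix (Fin 2) (Fin 2) ℝ)
    (hM : M = (1 / 2 : ℝ) • !![1, -α / l; α / l, 1])
    (x₀ : EuclideanSpace ℝ (Fin 2)) (hx₀ : x₀ ≠ 0) :
    Tendsto (fun n => (fun x => Matrix.toEuclideanLin M x)^[n] x₀) atTop
      (nhds (0 : EuclideanSpace ℝ (Fin 2))) ↔ L < -(2 * l) := by
  have hl2 : (0:ℝ) < -(2*l) := by linarith
  have hL0 : (0:ℝ) ≤ L := le_trans (by linarith) hL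
  set c : ℝ := L / (-(2*l)) with hc
  have hc0 : 0 ≤ c := div_nonneg hL0 hl2.le
  have hα2 : α ^ 2 = L ^ 2 - l ^ 2 := by
    rw [hα, Real.sq_sqrt]
    nlinarith
  have hln : l ≠ 0 := ne_of_lt hl
  -- key norm identity
  have key : ∀ x : EuclideanSpace ℝ (Fin 2),
      ‖Matrix.toEuclideanLin M x‖ = c * ‖x‖ := by
    intro x
    have h0 : (Matrix.toEuclideanLin M x) 0 = (1/2) * (x 0 + (-α/l) * x 1) := by
      simp [Matrix.toEuclideanLin_apply, hM, Matrix.mulVec, dotProduct,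
        Fin.sum_univ_two, Matrix.vecHead, Matrix.vecTail]
      ring
    have h1 : (Matrix.toEuclideanLin M x) 1 = (1/2) * ((α/l) * x 0 + x 1) := by
      simp [Matrix.toEuclideanLin_apply, hM, Matrix.mulVec, dotProduct,
        Fin.sum_univ_two, Matrix.vecHead, Matrix.vecTail]
      ring
    rw [EuclideanSpace.norm_eq, EuclideanSpace.norm_eq, Fin.sum_univ_two,
      Fin.sum_univ_two, h0, h1]
    rw [show c * Real.sqrt (‖x 0‖^2 + ‖x 1‖^2)
        = Real.sqrt (c^2 * (‖x 0‖^2 + ‖x 1‖^2)) by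
      rw [Real.sqrt_mul (by positivity), Real.sqrt_sq hc0]]
    congr 1
    have hc2 : c^2 = L^2 / (4 * l^2) := by
      rw [hc, div_pow]
      congr 1
      ring
    simp only [Real.norm_eq_abs, sq_abs]
    rw [hc2]
    field_simp
    linear_combination (4 * (x 0 ^ 2 + x 1 ^ 2)) * hα2
  have hiter : ∀ n : ℕ,
      ‖(fun x => Matrix.toEuclideanLin M x)^[n] x₀‖ = c^n * ‖x₀‖ := by
    intro n
    induction n with
    | zero => simp
    | succ n ih =>
      rw [Function.iterate_succ_apply', key, ih, pow_succ]
      ring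
  have hx₀n : ‖x₀‖ ≠ 0 := norm_ne_zero_iff.mpr hx₀
  constructor
  · intro h
    have h2 : Tendsto (fun n => c^n * ‖x₀‖) atTop (nhds 0) := by
      have := h.norm
      simpa [hiter] using this
    have h3 : Tendsto (fun n : ℕ => c^n) atTop (nhds 0) := by
      have := h2.mul_const (‖x₀‖⁻¹)
      simpa [mul_assoc, mul_inv_cancel₀ hx₀n] using this
    have hc1 : c < 1 := by
      by_contra hge
      push_neg at hge
      have : ∀ n : ℕ, (1:ℝ) ≤ c^n := fun n => one_le_pow₀ hge
      have := le_of_tendsto_of_tendsto tendsto_const_nhds h3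
        (Eventually.of_forall this)
      linarith
    rw [hc, div_lt_one hl2] at hc1
    exact hc1
  · intro h
    have hc1 : c < 1 := by rw [hc, div_lt_one hl2]; exact h
    rw [tendsto_zero_iff_norm_tendsto_zero]
    simp only [hiter]
    have : Tendsto (fun n : ℕ => c^n) atTop (nhds 0) :=
      tendsto_pow_atTop_nhds_zero_of_lt_one hc0 hc1
    simpa using this.mul_const ‖x₀‖
end

section
/- If F : ℝ → (nonempty compact convex subsets of ℝ) is relaxed one-sided Lipschitz with constant l, then the single-valued function x ↦ max F(x) is one-sided Lipschitz with constant l: (max F(x) - max F(x'))·(x - x') ≤ l(x - x')² for all x, x'. -/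
theorem stmt_15 (l : ℝ)
    (F : ℝ → Set ℝ)
    (hne : ∀ x, (F x).Nonempty) (hcp : ∀ x, IsCompact (F x)) (hcv : ∀ x, Convex ℝ (F x))
    (hrosl : ∀ x x', ∀ y ∈ F x, ∃ y' ∈ F x',
      (y - y') * (x - x') ≤ l * (x - x') ^ 2) :
    ∀ x x' : ℝ, (sSup (F x) - sSup (F x')) * (x - x') ≤ l * (x - x') ^ 2 := by
  intro x x'
  have hmem : ∀ z, sSup (F z) ∈ F z := fun z => (hcp z).sSup_mem (hne z)
  have hbdd : ∀ z, BddAbove (F z) := fun z => (hcp z).bddAbove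
  rcases lt_trichotomy x x' with h | h | h
  · obtain ⟨y', hy', hle⟩ := hrosl x' x _ (hmem x')
    have h1 : y' ≤ sSup (F x) := le_csSup (hbdd x) hy'
    have h2 : (sSup (F x) - sSup (F x')) * (x - x') ≤ (sSup (F x') - y') * (x' - x) := by
      nlinarith
    calc _ ≤ (sSup (F x') - y') * (x' - x) := h2
      _ ≤ l * (x' - x) ^ 2 := hle
      _ = l * (x - x') ^ 2 := by ring
  · simp [h]
  · obtain ⟨y', hy', hle⟩ := hrosl x x' _ (hmem x)
    have h1 : y' ≤ sSup (F x') := le_csSup (hbdd x') hy'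
    nlinarith
end

section
/- Let F : ℝ → (nonempty compact convex subsets of ℝ) be l-ROSL with l < 0 and L-Lipschitz with L < -4l, let x₀, ȳ ∈ ℝ. Then the iteration x_{n+1} = x_n + (1/(2l))(ȳ - Proj(ȳ, F(x_n))) satisfies dist(x_n, S_F(ȳ)) ≤ -(1/(2l))·κ^{n-1}·dist(ȳ, F(x₀)) for n ≥ 1, where κ = max{1/2, |1 + L/(2l)|}. -/
open Metric

set_option maxHeartbeats 1000000 in
theorem stmt_16 (l L : ℝ) (hl : l < 0) (hL0 : 0 ≤ L) (hL : L < -(4 * l))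
    (F : ℝ → Set ℝ)
    (hne : ∀ x, (F x).Nonempty) (hcp : ∀ x, IsCompact (F x)) (hcv : ∀ x, Convex ℝ (F x))
    (hrosl : ∀ x x', ∀ y ∈ F x, ∃ y' ∈ F x',
      (y - y') * (x - x') ≤ l * (x - x') ^ 2)
    (hlip : ∀ x x', Metric.hausdorffDist (F x) (F x') ≤ L * |x - x'|)
    (yb : ℝ) (x p : ℕ → ℝ)
    (hp : ∀ n, p n ∈ F (x n) ∧ dist yb (p n) = Metric.infDist yb (F (x n)))
    (hx : ∀ n, x (n + 1) = x n + (1 / (2 * l)) * (yb - p n))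
    (κ : ℝ) (hκ : κ = max (1 / 2) |1 + L / (2 * l)|) :
    ∀ n, 1 ≤ n →
      Metric.infDist (x n) {z | yb ∈ F z} ≤
        -(1 / (2 * l)) * κ ^ (n - 1) * Metric.infDist yb (F (x 0)) := by
  have hl2 : 2 * l < 0 := by linarith
  have hlne : l ≠ 0 := ne_of_lt hl
  have hbdd : ∀ t, BddAbove (F t) := fun t => (hcp t).bddAbove
  have hbddb : ∀ t, BddBelow (F t) := fun t => (hcp t).bddBelow
  have hsup_mem : ∀ t, sSup (F t) ∈ F t := fun t => (hcp t).sSup_mem (hne t)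
  have hinf_mem : ∀ t, sInf (F t) ∈ F t := fun t => (hcp t).sInf_mem (hne t)
  have hne_top : ∀ t t', EMetric.hausdorffEdist (F t) (F t') ≠ ⊤ := fun t t' =>
    hausdorffEdist_ne_top_of_nonempty_of_bounded (hne t) (hne t')
      (hcp t).isBounded (hcp t').isBounded
  -- endpoint decrease lemmas
  have hplus : ∀ c t : ℝ, c < t → sSup (F t) ≤ sSup (F c) + l * (t - c) := by
    intro c t hct
    obtain ⟨y, hymem, hy⟩ := hrosl t c (sSup (F t)) (hsup_mem t)
    have hpos : 0 < t - c := sub_pos.2 hct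
    have h1 : sSup (F t) - y ≤ l * (t - c) := by nlinarith [hy]
    have h2 : y ≤ sSup (F c) := le_csSup (hbdd c) hymem
    linarith
  have hminus : ∀ c t : ℝ, c < t → sInf (F t) ≤ sInf (F c) + l * (t - c) := by
    intro c t hct
    obtain ⟨y', hy'mem, hy'⟩ := hrosl c t (sInf (F c)) (hinf_mem c)
    have hneg : c - t < 0 := sub_neg.2 hct
    have h1 : l * (c - t) ≤ sInf (F c) - y' := by nlinarith [hy']
    have h2 : sInf (F t) ≤ y' := csInf_le (hbddb t) hy'mem
    linarith
  -- Lipschitz continuity of endpoints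
  have hsup_lip : ∀ t t', sSup (F t) - sSup (F t') ≤ L * |t - t'| := by
    intro t t'
    have h1 : infDist (sSup (F t)) (F t') ≤ hausdorffDist (F t) (F t') :=
      infDist_le_hausdorffDist_of_mem (hsup_mem t) (hne_top t t')
    obtain ⟨z, hzmem, hzd⟩ := (hcp t').exists_infDist_eq_dist (hne t') (sSup (F t))
    have hz : |sSup (F t) - z| ≤ L * |t - t'| := by
      rw [← Real.dist_eq, ← hzd]; exact h1.trans (hlip t t')
    have hz2 : z ≤ sSup (F t') := le_csSup (hbdd t') hzmem
    have := abs_le.1 hz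
    linarith [this.2]
  have hinf_lip : ∀ t t', sInf (F t) - sInf (F t') ≤ L * |t - t'| := by
    intro t t'
    have h1 : infDist (sInf (F t')) (F t) ≤ hausdorffDist (F t') (F t) :=
      infDist_le_hausdorffDist_of_mem (hinf_mem t') (hne_top t' t)
    obtain ⟨z, hzmem, hzd⟩ := (hcp t).exists_infDist_eq_dist (hne t) (sInf (F t'))
    have hz : |sInf (F t') - z| ≤ L * |t - t'| := by
      rw [← Real.dist_eq, ← hzd]
      refine h1.trans ((hlip t' t).trans ?_)
      rw [abs_sub_comm]
    have hz2 : sInf (F t) ≤ z := csInf_le (hbddb t) hzmem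
    have := abs_le.1 hz
    linarith [this.2]
  have hsup_cont : Continuous (fun t => sSup (F t)) := by
    refine LipschitzWith.continuous (K := Real.toNNReal L) (LipschitzWith.of_dist_le_mul ?_)
    intro a b
    rw [Real.dist_eq, Real.dist_eq, Real.coe_toNNReal L hL0, abs_sub_le_iff]
    exact ⟨hsup_lip a b, by rw [abs_sub_comm]; exact hsup_lip b a⟩
  have hinf_cont : Continuous (fun t => sInf (F t)) := by
    refine LipschitzWith.continuous (K := Real.toNNReal L) (LipschitzWith.of_dist_le_mul ?_)
    intro a b
    rw [Real.dist_eq, Real.dist_eq, Real.coe_toNNReal L hL0, abs_sub_le_iff]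
    exact ⟨hinf_lip a b, by rw [abs_sub_comm]; exact hinf_lip b a⟩
  -- kappa facts
  have hκhalf : 1 / 2 ≤ κ := hκ ▸ le_max_left _ _
  have hκ0 : 0 ≤ κ := by linarith
  have hκL : -(L / (2 * l)) - 1 ≤ κ := by
    rw [hκ]
    refine le_trans ?_ (le_max_right _ _)
    have := neg_le_abs (1 + L / (2 * l))
    linarith
  -- Lemma B : one step lands close to the solution set
  have lemB : ∀ n, infDist (x (n + 1)) {z | yb ∈ F z} ≤
      -(1 / (2 * l)) * infDist yb (F (x n)) := by
    intro n
    obtain ⟨hpmem, hpd⟩ := hp n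
    set d := infDist yb (F (x n)) with hdd
    clear_value d
    have hd0 : 0 ≤ d := by rw [hdd]; exact infDist_nonneg
    rcases lt_trichotomy (yb - p n) 0 with hlt | heq | hgt
    · -- yb below F (x n) : use sInf
      have hdval : d = p n - yb := by
        rw [← hpd, Real.dist_eq, abs_of_neg hlt]; ring
      have hdpos : 0 < d := by linarith
      -- p n = sInf (F (x n))
      have hinfeq : sInf (F (x n)) = p n := by
        by_contra hne'
        have h1 : sInf (F (x n)) ≤ p n := csInf_le (hbddb _) hpmem
        have h2 : d ≤ dist yb (sInf (F (x n))) := by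
          rw [hdd]; exact infDist_le_dist_of_mem (hinf_mem _)
        rcases lt_or_ge yb (sInf (F (x n))) with hcase | hcase
        · rw [Real.dist_eq, abs_of_neg (by linarith)] at h2
          have : p n ≤ sInf (F (x n)) := by linarith
          exact hne' (le_antisymm h1 this)
        · -- yb ∈ F (x n), contradiction
          have : yb ∈ F (x n) := (hcv _).ordConnected.out (hinf_mem _) hpmem
            ⟨hcase, by linarith⟩
          have : d = 0 := by rw [hdd]; exact infDist_zero_of_mem this
          linarith
      have hyb_lt : yb < sInf (F (x n)) := by rw [hinfeq]; linarith
      -- IVT for sInf on [x n, c]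
      set c := x n - d / l with hc
      clear_value c
      have hcx : x n < c := by
        have : d / l < 0 := div_neg_of_pos_of_neg hdpos hl
        rw [hc]; linarith
      have hgc : sInf (F c) ≤ yb := by
        have := hminus (x n) c hcx
        have hcalc : l * (c - x n) = -d := by rw [hc]; field_simp; ring
        rw [hinfeq] at this
        rw [hcalc] at this; linarith
      have hgx : yb ≤ sInf (F (x n)) := le_of_lt hyb_lt
      obtain ⟨xh, hxhmem, hxheq⟩ := intermediate_value_Icc' (le_of_lt hcx)
        (hinf_cont.continuousOn) ⟨hgc, hgx⟩
      have hxhS : xh ∈ {z | yb ∈ F z} := by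
        simp only [Set.mem_setOf_eq, ← hxheq]; exact hinf_mem xh
      refine le_trans (infDist_le_dist_of_mem hxhS) ?_
      rw [Real.dist_eq, hx n]
      have hstep : (1 / (2 * l)) * (yb - p n) = -(1 / (2 * l)) * d := by
        rw [hdval]; ring
      rw [hstep]
      have hxl : x n ≤ xh := hxhmem.1
      have hxu : xh ≤ x n - d / l := by rw [← hc]; exact hxhmem.2
      have hdl : d / l = 2 * (-(1 / (2 * l)) * d) * (-1) := by field_simp
      rw [abs_le]
      constructor <;> nlinarith [hxl, hxu]
    · -- yb = p n : x n is already a solution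
      have hyb : yb = p n := by linarith
      have hxS : x n ∈ {z | yb ∈ F z} := by simp only [Set.mem_setOf_eq, hyb]; exact hpmem
      have hd' : d = 0 := by rw [← hpd, Real.dist_eq, heq, abs_zero]
      have hxn1 : x (n + 1) = x n := by rw [hx n, heq]; ring
      rw [hxn1, hd', mul_zero]
      exact le_of_eq (infDist_zero_of_mem hxS)
    · -- yb above F (x n) : use sSup
      have hdval : d = yb - p n := by
        rw [← hpd, Real.dist_eq, abs_of_pos hgt]
      have hdpos : 0 < d := by linarith
      have hsupeq : sSup (F (x n)) = p n := by
        by_contra hne'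
        have h1 : p n ≤ sSup (F (x n)) := le_csSup (hbdd _) hpmem
        have h2 : d ≤ dist yb (sSup (F (x n))) := by
          rw [hdd]; exact infDist_le_dist_of_mem (hsup_mem _)
        rcases lt_or_ge (sSup (F (x n))) yb with hcase | hcase
        · rw [Real.dist_eq, abs_of_pos (by linarith)] at h2
          have : sSup (F (x n)) ≤ p n := by linarith
          exact hne' (le_antisymm this h1)
        · have : yb ∈ F (x n) := (hcv _).ordConnected.out hpmem (hsup_mem _)
            ⟨by linarith, hcase⟩
          have : d = 0 := by rw [hdd]; exact infDist_zero_of_mem this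
          linarith
      set c := x n + d / l with hc
      clear_value c
      have hcx : c < x n := by
        have : d / l < 0 := div_neg_of_pos_of_neg hdpos hl
        rw [hc]; linarith
      have hgc : yb ≤ sSup (F c) := by
        have := hplus c (x n) hcx
        have hcalc : l * (x n - c) = -d := by rw [hc]; field_simp; ring
        rw [hsupeq, hcalc] at this; linarith
      have hgx : sSup (F (x n)) ≤ yb := by rw [hsupeq]; linarith
      obtain ⟨xh, hxhmem, hxheq⟩ := intermediate_value_Icc' (le_of_lt hcx)
        (hsup_cont.continuousOn) ⟨hgx, hgc⟩
      have hxhS : xh ∈ {z | yb ∈ F z} := by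
        simp only [Set.mem_setOf_eq, ← hxheq]; exact hsup_mem xh
      refine le_trans (infDist_le_dist_of_mem hxhS) ?_
      rw [Real.dist_eq, hx n]
      have hstep : (1 / (2 * l)) * (yb - p n) = (1 / (2 * l)) * d := by rw [hdval]
      rw [hstep]
      have hxl : x n + d / l ≤ xh := by rw [← hc]; exact hxhmem.1
      have hxu : xh ≤ x n := hxhmem.2
      have hdl : d / l = 2 * ((1 / (2 * l)) * d) := by field_simp
      have hstepneg : (1 / (2 * l)) * d ≤ 0 := by
        apply mul_nonpos_of_nonpos_of_nonneg _ hd0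
        apply le_of_lt; exact div_neg_of_pos_of_neg one_pos hl2
      rw [abs_le]
      constructor <;> nlinarith [hxl, hxu]
  -- Lemma C : contraction of the residual
  have lemC : ∀ n, infDist yb (F (x (n + 1))) ≤ κ * infDist yb (F (x n)) := by
    intro n
    obtain ⟨hpmem, hpd⟩ := hp n
    set a := yb - p n with ha
    clear_value a
    have hd : infDist yb (F (x n)) = |a| := by rw [← hpd, Real.dist_eq, ← ha]
    rcases eq_or_ne a 0 with ha0 | hane
    · have hxn1 : x (n + 1) = x n := by rw [hx n, ← ha, ha0]; ring
      rw [hxn1, hd, ha0]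
      simp
    · -- main case
      obtain ⟨y', hy'mem, hy'⟩ := hrosl (x n) (x (n + 1)) (p n) hpmem
      have hxd : x n - x (n + 1) = -(1 / (2 * l)) * a := by rw [hx n, ← ha]; ring
      rw [hxd] at hy'
      have key : a ^ 2 / 2 ≤ a * (y' - p n) := by
        have h1 : (p n - y') * (-(1 / (2 * l)) * a) = (a * (y' - p n)) / (2 * l) := by
          field_simp; ring
        have h2 : l * (-(1 / (2 * l)) * a) ^ 2 = a ^ 2 / (4 * l) := by
          field_simp; ring
        rw [h1, h2] at hy'
        have h3 : 4 * l * (a ^ 2 / (4 * l)) ≤ 4 * l * (a * (y' - p n) / (2 * l)) :=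
          mul_le_mul_of_nonpos_left hy' (by linarith : (4 * l : ℝ) ≤ 0)
        have h4 : 4 * l * (a ^ 2 / (4 * l)) = a ^ 2 := by field_simp
        have h5 : 4 * l * (a * (y' - p n) / (2 * l)) = 2 * (a * (y' - p n)) := by
          field_simp; ring
        rw [h4, h5] at h3
        linarith
      -- z close to p n in F (x (n+1))
      obtain ⟨z, hzmem, hzd⟩ := (hcp (x (n + 1))).exists_infDist_eq_dist (hne _) (p n)
      have h2linv : 1 / (2 * l) < 0 := div_neg_of_pos_of_neg one_pos hl2
      have hz : |p n - z| ≤ -(L / (2 * l)) * |a| := by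
        rw [← Real.dist_eq, ← hzd]
        refine le_trans (infDist_le_hausdorffDist_of_mem hpmem (hne_top _ _)) ?_
        refine le_trans (hlip (x n) (x (n + 1))) ?_
        rw [hxd, abs_mul, abs_neg, abs_of_neg h2linv]
        exact le_of_eq (by ring)
      -- the clamped point
      set lo := min y' z with hlo
      set hi := max y' z with hhi
      clear_value lo hi
      have hlohi : lo ≤ hi := by rw [hlo, hhi]; exact min_le_max
      have hlomem : lo ∈ F (x (n + 1)) := by
        rcases le_total y' z with h | h
        · rwa [hlo, min_eq_left h]
        · rwa [hlo, min_eq_right h]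
      have hhimem : hi ∈ F (x (n + 1)) := by
        rcases le_total y' z with h | h
        · rwa [hhi, max_eq_right h]
        · rwa [hhi, max_eq_left h]
      have hIcc : Set.Icc lo hi ⊆ F (x (n + 1)) :=
        (hcv _).ordConnected.out hlomem hhimem
      set w := max lo (min yb hi) with hw
      clear_value w
      have hwmem : w ∈ F (x (n + 1)) := by
        apply hIcc
        rw [hw]
        constructor
        · exact le_max_left _ _
        · exact max_le hlohi (min_le_right _ _)
      -- key bounds
      have hzle : z - p n ≤ -(L / (2 * l)) * |a| := by
        have := abs_le.1 hz
        linarith [this.1]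
      have hzge : p n - z ≤ -(L / (2 * l)) * |a| := (abs_le.1 hz).2.trans (le_refl _) |>.trans (le_refl _)
      have hA : yb - hi ≤ κ * |a| := by
        rcases lt_or_gt_of_ne hane with haneg | hapos
        · -- a < 0 : use z, yb - z = a - (z - p n) ≤ a + λ'(-a)
          have h1 : yb - hi ≤ yb - z := by
            have : z ≤ hi := by rw [hhi]; exact le_max_right _ _
            linarith
          have habs : |a| = -a := abs_of_neg haneg
          rw [habs] at hzge
          have h2 : yb - z = a + (p n - z) := by rw [ha]; ring
          have h3 : yb - z ≤ (-(L / (2 * l)) - 1) * (-a) := by rw [h2]; linarith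
          rw [habs]
          refine h1.trans (h3.trans ?_)
          apply mul_le_mul_of_nonneg_right hκL (by linarith)
        · -- a > 0 : use y', yb - y' = a - (y' - p n) ≤ a/2
          have hb : a / 2 ≤ y' - p n := by nlinarith [key]
          have h1 : yb - hi ≤ yb - y' := by
            have : y' ≤ hi := by rw [hhi]; exact le_max_left _ _
            linarith
          have habs : |a| = a := abs_of_pos hapos
          rw [habs]
          have h2 : yb - y' = a - (y' - p n) := by rw [ha]; ring
          have h3 : yb - y' ≤ a / 2 := by rw [h2]; linarith
          have : a / 2 ≤ κ * a := by nlinarith [hκhalf, hapos]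
          linarith
      have hB : lo - yb ≤ κ * |a| := by
        rcases lt_or_gt_of_ne hane with haneg | hapos
        · -- a < 0 : use y', y' - yb = (y' - p n) - a ≤ a/2 - a = -a/2
          have hb : y' - p n ≤ a / 2 := by nlinarith [key]
          have h1 : lo - yb ≤ y' - yb := by
            have : lo ≤ y' := by rw [hlo]; exact min_le_left _ _
            linarith
          have habs : |a| = -a := abs_of_neg haneg
          rw [habs]
          have h3 : y' - yb ≤ -a / 2 := by
            have : y' - yb = (y' - p n) - a := by rw [ha]; ring
            rw [this]; linarith
          have : -a / 2 ≤ κ * (-a) := by nlinarith [hκhalf, haneg]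
          linarith
        · -- a > 0 : use z
          have h1 : lo - yb ≤ z - yb := by
            have : lo ≤ z := by rw [hlo]; exact min_le_right _ _
            linarith
          have habs : |a| = a := abs_of_pos hapos
          rw [habs] at hzle ⊢
          have h3 : z - yb ≤ (-(L / (2 * l)) - 1) * a := by
            have : z - yb = (z - p n) - a := by rw [ha]; ring
            rw [this]; linarith
          refine h1.trans (h3.trans ?_)
          apply mul_le_mul_of_nonneg_right hκL (le_of_lt hapos)
      -- conclude
      refine le_trans (infDist_le_dist_of_mem hwmem) ?_
      rw [hd, Real.dist_eq]
      rcases le_total yb lo with h1 | h1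
      · have hmin : min yb hi = yb := min_eq_left (h1.trans hlohi)
        have hweq : w = lo := by rw [hw, hmin, max_eq_left h1]
        rw [hweq, abs_of_nonpos (by linarith)]
        linarith
      · rcases le_total yb hi with h2 | h2
        · have hweq : w = yb := by rw [hw, min_eq_left h2, max_eq_right h1]
          rw [hweq, sub_self, abs_zero]
          positivity
        · have hweq : w = hi := by rw [hw, min_eq_right h2, max_eq_right (hlohi)]
          rw [hweq, abs_of_nonneg (by linarith)]
          linarith
  -- geometric decay
  have hiter : ∀ n, infDist yb (F (x n)) ≤ κ ^ n * infDist yb (F (x 0)) := by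
    intro n
    induction n with
    | zero => simp
    | succ k ih =>
      calc infDist yb (F (x (k + 1))) ≤ κ * infDist yb (F (x k)) := lemC k
        _ ≤ κ * (κ ^ k * infDist yb (F (x 0))) := by
            exact mul_le_mul_of_nonneg_left ih hκ0
        _ = κ ^ (k + 1) * infDist yb (F (x 0)) := by ring
  -- final assembly
  intro n hn
  obtain ⟨m, rfl⟩ : ∃ m, n = m + 1 := ⟨n - 1, (Nat.succ_pred_eq_of_pos hn).symm⟩
  simp only [Nat.add_sub_cancel]
  have hfac : (0:ℝ) ≤ -(1 / (2 * l)) := by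
    have : 1 / (2 * l) < 0 := div_neg_of_pos_of_neg one_pos hl2
    linarith
  calc infDist (x (m + 1)) {z | yb ∈ F z}
      ≤ -(1 / (2 * l)) * infDist yb (F (x m)) := lemB m
    _ ≤ -(1 / (2 * l)) * (κ ^ m * infDist yb (F (x 0))) :=
        mul_le_mul_of_nonneg_left (hiter m) hfac
    _ = -(1 / (2 * l)) * κ ^ m * infDist yb (F (x 0)) := by ring
end

section
/- Let F : ℝ^d → (nonempty compact convex subsets of ℝ^d) (d > 1) be usc, l-ROSL with l < 0, and L-Lipschitz with -l ≤ L ≤ -√2·l. Then the iteration x_{n+1} := x_n + (l/L²)(ȳ - Proj(ȳ, F(x_n))) satisfies dist(ȳ, F(x_{n+1})) ≤ (√(L² - l²)/L)·dist(ȳ, F(x_n)) for all n, and hence converges to a solution of ȳ ∈ F(x). -/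
set_option maxHeartbeats 2000000


open Metric Filter RealInnerProductSpace

theorem stmt_17 {d : ℕ} (hd : 1 < d)
    (F : EuclideanSpace ℝ (Fin d) → Set (EuclideanSpace ℝ (Fin d)))
    (hne : ∀ x, (F x).Nonempty) (hcp : ∀ x, IsCompact (F x)) (hcv : ∀ x, Convex ℝ (F x))
    (husc : ∀ x, ∀ ε > 0, ∃ δ > 0, ∀ x', dist x' x < δ →
      ∀ y ∈ F x', Metric.infDist y (F x) < ε)
    (l L : ℝ) (hl : l < 0) (hlL : -l ≤ L) (hL : L ≤ -(Real.sqrt 2 * l))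
    (hrosl : ∀ x x', ∀ y ∈ F x, ∃ y' ∈ F x',
      ⟪y - y', x - x'⟫ ≤ l * ‖x - x'‖ ^ 2)
    (hlip : ∀ x x', Metric.hausdorffDist (F x) (F x') ≤ L * ‖x - x'‖)
    (yb : EuclideanSpace ℝ (Fin d))
    (x p : ℕ → EuclideanSpace ℝ (Fin d))
    (hp : ∀ n, p n ∈ F (x n) ∧ dist yb (p n) = Metric.infDist yb (F (x n)))
    (hx : ∀ n, x (n + 1) = x n + (l / L ^ 2) • (yb - p n)) :
    (∀ n, Metric.infDist yb (F (x (n + 1))) ≤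
        (Real.sqrt (L ^ 2 - l ^ 2) / L) * Metric.infDist yb (F (x n))) ∧
    ∃ xb : EuclideanSpace ℝ (Fin d), yb ∈ F xb ∧ Tendsto x atTop (nhds xb) := by
  have hl0 : (0:ℝ) < -l := by linarith
  have hL0 : (0:ℝ) < L := by linarith
  have hL2 : (0:ℝ) < L ^ 2 := by positivity
  have hsq : (0:ℝ) ≤ L ^ 2 - l ^ 2 := by nlinarith
  set σ := Real.sqrt (L ^ 2 - l ^ 2) with hσdef
  have hσsq : σ ^ 2 = L ^ 2 - l ^ 2 := Real.sq_sqrt hsq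
  have hσ0 : 0 ≤ σ := Real.sqrt_nonneg _
  have hκ0 : 0 ≤ σ / L := by positivity
  have hstep : ∀ n, Metric.infDist yb (F (x (n + 1))) ≤
      (σ / L) * Metric.infDist yb (F (x n)) := by
    intro n
    obtain ⟨q, hqK, hqd⟩ := (hcp (x (n + 1))).exists_infDist_eq_dist (hne _) yb
    rw [hqd, ← (hp n).2]
    set V := dist yb (p n) with hVdef
    have hV0 : 0 ≤ V := dist_nonneg
    have hVnorm : ‖yb - p n‖ = V := (dist_eq_norm _ _).symm
    by_cases hyq : yb = q
    · rw [hyq, dist_self]; positivity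
    set D := dist yb q with hDdef
    have hD0 : 0 < D := dist_pos.mpr hyq
    have hDnorm : ‖yb - q‖ = D := (dist_eq_norm _ _).symm
    set d0 : EuclideanSpace ℝ (Fin d) := D⁻¹ • (yb - q) with hd0def
    have hd0 : ‖d0‖ = 1 := by
      rw [hd0def, norm_smul, hDnorm, Real.norm_eq_abs,
        abs_of_pos (inv_pos.mpr hD0), inv_mul_cancel₀ (ne_of_gt hD0)]
    -- projection characterization
    have hproj : ∀ w ∈ F (x (n + 1)), ⟪yb - q, w - q⟫ ≤ 0 := by
      refine (norm_eq_iInf_iff_real_inner_le_zero (hcv _) hqK).mp ?_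
      have h1 : Metric.infDist yb (F (x (n + 1))) = ⨅ w : F (x (n + 1)), dist yb w :=
        Metric.infDist_eq_iInf
      rw [hqd] at h1
      rw [hDnorm]
      simpa [dist_eq_norm] using h1
    -- master inequality
    have master : ∀ r : ℝ, 0 ≤ r →
        D ≤ ⟪yb - p n, d0⟫ + L * ‖(l / L ^ 2) • (yb - p n) + r • d0‖ + l * r := by
      intro r hr
      set x'' := x (n + 1) + r • d0 with hx''def
      obtain ⟨y, hyF, hyd⟩ := (hcp x'').exists_infDist_eq_dist (hne x'') (p n)
      have hEd : EMetric.hausdorffEdist (F (x n)) (F x'') ≠ ⊤ :=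
        Metric.hausdorffEdist_ne_top_of_nonempty_of_bounded (hne _) (hne _)
          (hcp _).isBounded (hcp _).isBounded
      have hpy : dist (p n) y ≤ L * ‖x'' - x n‖ := by
        rw [← hyd]
        calc Metric.infDist (p n) (F x'')
            ≤ Metric.hausdorffDist (F (x n)) (F x'') :=
              Metric.infDist_le_hausdorffDist_of_mem (hp n).1 hEd
          _ ≤ L * ‖x n - x''‖ := hlip _ _
          _ = L * ‖x'' - x n‖ := by rw [norm_sub_rev]
      obtain ⟨k, hkK, hky⟩ : ∃ k ∈ F (x (n + 1)), ⟪y - k, d0⟫ ≤ l * r := by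
        rcases eq_or_lt_of_le hr with h0 | hpos
        · refine ⟨y, ?_, ?_⟩
          · have hxx : x'' = x (n + 1) := by rw [hx''def, ← h0, zero_smul, add_zero]
            rwa [hxx] at hyF
          · simp [← h0]
        · obtain ⟨k, hkK, hk⟩ := hrosl x'' (x (n + 1)) y hyF
          have hxd : x'' - x (n + 1) = r • d0 := by rw [hx''def]; abel
          rw [hxd, real_inner_smul_right, norm_smul, hd0, mul_one,
            Real.norm_eq_abs, abs_of_pos hpos] at hk
          refine ⟨k, hkK, ?_⟩
          have h2 : r * ⟪y - k, d0⟫ ≤ r * (l * r) := by nlinarith [hk]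
          exact le_of_mul_le_mul_left h2 hpos
      have h1 : D ≤ ⟪yb - k, d0⟫ := by
        have hqk := hproj k hkK
        have e0 : ⟪yb - k, yb - q⟫ = D ^ 2 - ⟪yb - q, k - q⟫ := by
          have h3 : yb - k = (yb - q) - (k - q) := by abel
          rw [h3, inner_sub_left, real_inner_self_eq_norm_sq, hDnorm, real_inner_comm]
        have e1 : ⟪yb - k, d0⟫ = D⁻¹ * (D ^ 2 - ⟪yb - q, k - q⟫) := by
          rw [hd0def, real_inner_smul_right, e0]
        rw [e1]
        have e2 : D = D⁻¹ * D ^ 2 := by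
          rw [sq, ← mul_assoc, inv_mul_cancel₀ (ne_of_gt hD0), one_mul]
        calc D = D⁻¹ * D ^ 2 := e2
          _ ≤ D⁻¹ * (D ^ 2 - ⟪yb - q, k - q⟫) := by
              apply mul_le_mul_of_nonneg_left (by linarith) (le_of_lt (inv_pos.mpr hD0))
      have h2 : ⟪yb - k, d0⟫ ≤ ⟪yb - p n, d0⟫ + L * ‖x'' - x n‖ + l * r := by
        have h3 : ⟪p n - y, d0⟫ ≤ L * ‖x'' - x n‖ := by
          calc ⟪p n - y, d0⟫ ≤ ‖p n - y‖ * ‖d0‖ := real_inner_le_norm _ _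
            _ = dist (p n) y := by rw [hd0, mul_one, dist_eq_norm]
            _ ≤ L * ‖x'' - x n‖ := hpy
        have e2 : yb - k = (yb - p n) + ((p n - y) + (y - k)) := by abel
        calc ⟪yb - k, d0⟫
            = ⟪yb - p n, d0⟫ + (⟪p n - y, d0⟫ + ⟪y - k, d0⟫) := by
              rw [e2, inner_add_left, inner_add_left]
          _ ≤ _ := by linarith
      have h4 : x'' - x n = (l / L ^ 2) • (yb - p n) + r • d0 := by
        rw [hx''def, hx n]; abel
      rw [h4] at h2
      linarith
    -- scalar setup
    set G := ⟪yb - p n, d0⟫ with hGdef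
    have hGV : G ^ 2 ≤ V ^ 2 := by
      have h5 := abs_real_inner_le_norm (yb - p n) d0
      rw [hVnorm, hd0, mul_one] at h5
      nlinarith [le_abs_self G, neg_abs_le G]
    set W := Real.sqrt (V ^ 2 - G ^ 2) with hWdef
    have hW0 : 0 ≤ W := Real.sqrt_nonneg _
    have hWsq : W ^ 2 = V ^ 2 - G ^ 2 := Real.sq_sqrt (by linarith)
    have hexp : ∀ r : ℝ, ‖(l / L ^ 2) • (yb - p n) + r • d0‖ ^ 2
        = (l / L ^ 2) ^ 2 * V ^ 2 + 2 * (l / L ^ 2) * r * G + r ^ 2 := by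
      intro r
      rw [norm_add_sq_real, norm_smul, norm_smul, hVnorm, hd0, real_inner_smul_left,
        real_inner_smul_right, ← hGdef, Real.norm_eq_abs, Real.norm_eq_abs, mul_one,
        mul_pow, sq_abs, sq_abs]
      ring
    have hbound : ∀ r N : ℝ, 0 ≤ r → 0 ≤ N →
        ‖(l / L ^ 2) • (yb - p n) + r • d0‖ ^ 2 ≤ N ^ 2 →
        D ≤ G + L * N + l * r := by
      intro r N hr hN hQ
      have hm := master r hr
      have hnorm : ‖(l / L ^ 2) • (yb - p n) + r • d0‖ ≤ N := by
        nlinarith [norm_nonneg ((l / L ^ 2) • (yb - p n) + r • d0)]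
      have := mul_le_mul_of_nonneg_left hnorm hL0.le
      linarith
    by_cases hσz : σ = 0
    · -- case L² = l²
      have hlL' : l = -L := by nlinarith [hσsq]
      rw [hσz, zero_div, zero_mul]
      refine le_of_forall_pos_le_add fun ε hε => ?_
      set u := W ^ 2 / (2 * L * ε) + 1 with hudef
      have hu0 : 0 < u := by positivity
      set r := max G 0 / L + u with hrdef
      have hr0 : 0 ≤ r :=
        add_nonneg (div_nonneg (le_max_right G 0) hL0.le) hu0.le
      have hxbar : u ≤ r - G / L := by
        have h6 : G / L ≤ max G 0 / L := by
          gcongr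
          exact le_max_left G 0
        linarith
      have hxb0 : 0 < r - G / L := lt_of_lt_of_le hu0 hxbar
      have he10 : ε * (2 * L * u) = W ^ 2 + 2 * L * ε := by
        rw [hudef]; field_simp
      clear_value u
      clear_value r
      set N := (r - G / L) + W ^ 2 / (2 * L ^ 2 * (r - G / L)) with hNdef
      have hN0 : 0 ≤ N :=
        add_nonneg hxb0.le
          (div_nonneg (sq_nonneg W) (mul_nonneg (by positivity) hxb0.le))
      clear_value N
      have hQ : ‖(l / L ^ 2) • (yb - p n) + r • d0‖ ^ 2 ≤ N ^ 2 := by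
        rw [hexp r, hNdef]
        have h6 : (l / L ^ 2) ^ 2 * V ^ 2 + 2 * (l / L ^ 2) * r * G + r ^ 2
            = (r - G / L) ^ 2 + W ^ 2 / L ^ 2 := by
          rw [hlL', hWsq]; field_simp; ring
        rw [h6]
        have key : ∀ a b c : ℝ, a ≠ 0 → c ≠ 0 →
            2 * a * (b / (2 * c * a)) = b / c := by
          intro a b c ha hc; field_simp
        have h7 : 2 * (r - G / L) * (W ^ 2 / (2 * L ^ 2 * (r - G / L))) = W ^ 2 / L ^ 2 :=
          key _ _ _ hxb0.ne' (by positivity)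
        have hexpand : ((r - G / L) + W ^ 2 / (2 * L ^ 2 * (r - G / L))) ^ 2
            = (r - G / L) ^ 2 + 2 * (r - G / L) * (W ^ 2 / (2 * L ^ 2 * (r - G / L)))
              + (W ^ 2 / (2 * L ^ 2 * (r - G / L))) ^ 2 := by ring
        linarith [sq_nonneg (W ^ 2 / (2 * L ^ 2 * (r - G / L)))]
      have hD' := hbound r N hr0 hN0 hQ
      have e7 : G + L * N + l * r = W ^ 2 / (2 * L * (r - G / L)) := by
        rw [hlL', hNdef]
        have key2 : ∀ a b : ℝ, a ≠ 0 → L * (b / (2 * L ^ 2 * a)) = b / (2 * L * a) := by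
          intro a b ha; field_simp
        have h12 := key2 (r - G / L) (W ^ 2) hxb0.ne'
        have h13 : L * (r - G / L) = L * r - G := by
          field_simp
        rw [mul_add, h12, h13]; ring
      rw [e7] at hD'
      have h8 : W ^ 2 / (2 * L * (r - G / L)) ≤ 0 + ε := by
        rw [zero_add, div_le_iff₀ (by positivity)]
        have h10 : ε * (2 * L * u) ≤ ε * (2 * L * (r - G / L)) := by
          gcongr
        have h11 : 0 < 2 * L * ε := by positivity
        linarith [he10]
      linarith
    · have hσp : 0 < σ := lt_of_le_of_ne hσ0 (Ne.symm hσz)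
      by_cases hcase : 0 ≤ G * σ + (-l) * W
      · -- main case
        set r := (-l) * (G * σ + (-l) * W) / (L ^ 2 * σ) with hrdef
        have hr0 : 0 ≤ r :=
          div_nonneg (mul_nonneg hl0.le hcase) (by positivity)
        set N := (-l) * W / (L * σ) with hNdef
        have hN0 : 0 ≤ N := div_nonneg (mul_nonneg hl0.le hW0) (by positivity)
        have hQ : ‖(l / L ^ 2) • (yb - p n) + r • d0‖ ^ 2 = N ^ 2 := by
          rw [hexp r, hrdef, hNdef]
          have hV2 : V ^ 2 = W ^ 2 + G ^ 2 := by linarith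
          field_simp
          linear_combination (l^2*σ^2) * hV2 + (l^2*W^2) * hσsq
        have hD' := hbound r N hr0 hN0 (le_of_eq hQ)
        have hCS : G * σ + (-l) * W ≤ L * V := by
          nlinarith [sq_nonneg (G * (-l) - W * σ), hWsq, hσsq, hcase,
            mul_nonneg hV0 hL0.le]
        have e8 : G + L * N + l * r = σ * (G * σ + (-l) * W) / L ^ 2 := by
          rw [hNdef, hrdef]
          field_simp
          linear_combination (-(G*σ - l*W)) * hσsq
        rw [e8] at hD'
        have h9 : σ * (G * σ + (-l) * W) ≤ σ * (L * V) :=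
          mul_le_mul_of_nonneg_left hCS hσ0
        have h10 : σ * (G * σ + (-l) * W) / L ^ 2 ≤ σ * (L * V) / L ^ 2 := by
          gcongr
        have e9 : σ * (L * V) / L ^ 2 = σ / L * V := by
          field_simp
        linarith [e9 ▸ h10]
      · push_neg at hcase
        set N := (-l) / L ^ 2 * V with hNdef
        have hN0 : 0 ≤ N := by
          apply mul_nonneg (div_nonneg hl0.le hL2.le) hV0
        have hQ : ‖(l / L ^ 2) • (yb - p n) + (0:ℝ) • d0‖ ^ 2 = N ^ 2 := by
          rw [hexp 0, hNdef]; ring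
        have hD' := hbound 0 N le_rfl hN0 (le_of_eq hQ)
        have hGneg : G < 0 := by nlinarith [mul_nonneg hl0.le hW0]
        have h1' : (-l) * W ≤ -G * σ := by linarith
        have h2' : l ^ 2 * (V ^ 2 - G ^ 2) ≤ G ^ 2 * (L ^ 2 - l ^ 2) := by
          nlinarith [mul_nonneg hl0.le hW0]
        have h5' : (-l) * V ≤ -G * L := by
          nlinarith [mul_nonneg hl0.le hV0, mul_nonneg (le_of_lt (neg_pos.mpr hGneg)) hL0.le]
        have hGL : G * L + (-l) * V ≤ σ * V := by
          have := mul_nonneg hσ0 hV0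
          linarith
        have e8 : G + L * N + l * 0 = (G * L + (-l) * V) / L := by
          rw [hNdef]; field_simp; ring
        rw [e8] at hD'
        have e9 : σ / L * V = σ * V / L := by ring
        rw [e9]
        calc D ≤ (G * L + (-l) * V) / L := hD'
          _ ≤ σ * V / L := by gcongr
  refine ⟨hstep, ?_⟩
  have hκ1 : σ / L < 1 := by
    rw [div_lt_one hL0]
    nlinarith [hσsq, hσ0, hL0, mul_pos hl0 hl0]
  set κ := σ / L with hκdef
  set V0 := Metric.infDist yb (F (x 0)) with hV0def
  have hV00 : 0 ≤ V0 := Metric.infDist_nonneg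
  have hVbound : ∀ n, Metric.infDist yb (F (x n)) ≤ κ ^ n * V0 := by
    intro n
    induction n with
    | zero => simp [hV0def]
    | succ n ih =>
      calc Metric.infDist yb (F (x (n + 1))) ≤ κ * Metric.infDist yb (F (x n)) := hstep n
        _ ≤ κ * (κ ^ n * V0) := mul_le_mul_of_nonneg_left ih hκ0
        _ = κ ^ (n + 1) * V0 := by ring
  have hcoef : (0:ℝ) ≤ -(l / L ^ 2) := by
    rw [← neg_div]
    exact div_nonneg hl0.le hL2.le
  have hdx : ∀ n, dist (x n) (x (n + 1)) ≤ (-(l / L ^ 2) * V0) * κ ^ n := by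
    intro n
    rw [dist_eq_norm, hx n]
    have e1 : x n - (x n + (l / L ^ 2) • (yb - p n)) = (-(l / L ^ 2)) • (yb - p n) := by
      rw [neg_smul]; abel
    rw [e1, norm_smul, Real.norm_eq_abs, abs_of_nonneg hcoef]
    have h10 : ‖yb - p n‖ ≤ κ ^ n * V0 := by
      rw [← dist_eq_norm, (hp n).2]; exact hVbound n
    calc -(l / L ^ 2) * ‖yb - p n‖ ≤ -(l / L ^ 2) * (κ ^ n * V0) :=
          mul_le_mul_of_nonneg_left h10 hcoef
      _ = (-(l / L ^ 2) * V0) * κ ^ n := by ring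
  have hcauchy : CauchySeq x := cauchySeq_of_le_geometric κ _ hκ1 hdx
  obtain ⟨xb, hxb⟩ := cauchySeq_tendsto_of_complete hcauchy
  refine ⟨xb, ?_, hxb⟩
  rw [((hcp xb).isClosed).mem_iff_infDist_zero (hne xb)]
  refine le_antisymm ?_ Metric.infDist_nonneg
  refine le_of_forall_pos_le_add fun ε hε => ?_
  obtain ⟨δ, hδ0, hδ⟩ := husc xb (ε / 2) (by linarith)
  obtain ⟨N1, hN1⟩ := Metric.tendsto_atTop.mp hxb δ hδ0
  have h12 : Tendsto (fun n => κ ^ n * V0) atTop (nhds 0) := by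
    simpa using (tendsto_pow_atTop_nhds_zero_of_lt_one hκ0 hκ1).mul_const V0
  have h13 : ∀ᶠ n in atTop, κ ^ n * V0 < ε / 2 :=
    h12.eventually_lt_const (by linarith)
  obtain ⟨N2, hN2⟩ := eventually_atTop.mp h13
  set n := max N1 N2 with hndef
  have hd1 : dist (x n) xb < δ := hN1 n (le_max_left _ _)
  have hd3 : Metric.infDist (p n) (F xb) < ε / 2 := hδ (x n) hd1 (p n) (hp n).1
  have hd2 : dist yb (p n) < ε / 2 := by
    rw [(hp n).2]
    exact lt_of_le_of_lt (hVbound n) (hN2 n (le_max_right _ _))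
  calc Metric.infDist yb (F xb) ≤ Metric.infDist (p n) (F xb) + dist yb (p n) :=
        Metric.infDist_le_infDist_add_dist
    _ ≤ 0 + ε := by linarith
end
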